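/- Let X be a uniformly convex Banach space. Then the pair (X, 𝕂) has the property L_{o,o} for linear functionals: for every ε > 0 and every x* ∈ X* with ‖x*‖ = 1, there exists η > 0 such that whenever x ∈ S_X satisfies ‖x*(x)‖ > 1 - η, there exists x₀ ∈ S_X with ‖x*(x₀)‖ = 1 and ‖x₀ - x‖ < ε. -/

import Mathlib

open scoped Topology

private lemma phase_smul {𝕜 : Type*} [RCLike 𝕜] {X : Type*} [NormedAddCommGroup X]
    [NormedSpace 𝕜 X] (f : X →L[𝕜] 𝕜) (x : X) (hx : f x ≠ 0) :
    ∃ u : 𝕜, ‖u‖ = 1 ∧ f (u • x) = ((‖f x‖ : ℝ) : 𝕜) := by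
  refine ⟨((‖f x‖ : ℝ) : 𝕜) / f x, ?_, ?_⟩
  · rw [norm_div, RCLike.norm_ofReal, abs_of_nonneg (norm_nonneg _),
      div_self (norm_ne_zero_iff.2 hx)]
  · rw [map_smul, smul_eq_mul, div_mul_cancel₀ _ hx]

private lemma exists_norm_attained {𝕜 : Type*} [RCLike 𝕜] {X : Type*} [NormedAddCommGroup X]
    [NormedSpace 𝕜 X] [UniformConvexSpace X] [CompleteSpace X]
    (f : X →L[𝕜] 𝕜) (hf : ‖f‖ = 1) : ∃ z : X, ‖z‖ = 1 ∧ f z = 1 := by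
  letI : NormedSpace ℝ X := NormedSpace.restrictScalars ℝ 𝕜 X
  have hle : ∀ v : X, ‖f v‖ ≤ ‖v‖ := fun v => by
    simpa [hf] using f.le_opNorm v
  have hseq : ∀ n : ℕ, ∃ y : X, ‖y‖ ≤ 1 ∧ 1 - 1 / (n + 1) < ‖f y‖ ∧ f y = ((‖f y‖ : ℝ) : 𝕜) := by
    intro n
    have h1 : (1 : ℝ) - 1 / (n + 1) < ‖f‖ := by
      rw [hf]
      have : (0 : ℝ) < 1 / (n + 1) := by positivity
      linarith
    obtain ⟨x, hx1, hx2⟩ := f.exists_lt_apply_of_lt_opNorm h1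
    have hxne : f x ≠ 0 := by
      intro h
      rw [h, norm_zero] at hx2
      have : (1 : ℝ) / (n + 1) ≤ 1 := by
        rw [div_le_one (by positivity)]; linarith [Nat.cast_nonneg (α := ℝ) n]
      linarith
    obtain ⟨u, hu, hux⟩ := phase_smul f x hxne
    refine ⟨u • x, ?_, ?_, ?_⟩
    · rw [norm_smul, hu, one_mul]; exact hx1.le
    · rw [hux, RCLike.norm_ofReal, abs_of_nonneg (norm_nonneg _)]; exact hx2
    · rw [hux, RCLike.norm_ofReal, abs_of_nonneg (norm_nonneg _)]
  choose y hy1 hy2 hy3 using hseq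
  -- the maximizing sequence is Cauchy
  have hC : CauchySeq y := by
    rw [Metric.cauchySeq_iff]
    intro ε hε
    obtain ⟨δ, hδ, hconv⟩ :=
      exists_forall_closed_ball_dist_add_le_two_sub X (half_pos hε)
    obtain ⟨N, hN⟩ := exists_nat_gt (2 / δ)
    refine ⟨N, fun m hm n hn => ?_⟩
    have hlow : ∀ k : ℕ, N ≤ k → 1 - δ / 2 < ‖f (y k)‖ := by
      intro k hk
      have h1 : (1 : ℝ) / (k + 1) ≤ 1 / (N + 1) := by
        apply one_div_le_one_div_of_le (by positivity)
        have := (Nat.cast_le (α := ℝ)).2 hk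
        linarith
      have h2 : (1 : ℝ) / (N + 1) < δ / 2 := by
        rw [div_lt_iff₀ (by positivity)]
        rw [div_lt_iff₀ hδ] at hN
        have : (0 : ℝ) < δ := hδ
        nlinarith [Nat.cast_nonneg (α := ℝ) N]
      have := hy2 k
      linarith
    have hsum : 2 - δ < ‖y m + y n‖ := by
      have h1 : ‖f (y m + y n)‖ ≤ ‖y m + y n‖ := hle _
      have h3 : ‖f (y m + y n)‖ = ‖f (y m)‖ + ‖f (y n)‖ := by
        conv_lhs => rw [map_add, hy3 m, hy3 n, ← RCLike.ofReal_add]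
        rw [RCLike.norm_ofReal, abs_of_nonneg (by positivity)]
      have hm' := hlow m hm
      have hn' := hlow n hn
      linarith
    rw [dist_eq_norm]
    by_contra h
    push_neg at h
    have h' : ε / 2 ≤ ‖y m - y n‖ := by linarith [half_lt_self hε]
    have := hconv (hy1 m) (hy1 n) h'
    linarith
  obtain ⟨z, hz⟩ := cauchySeq_tendsto_of_complete hC
  -- ‖f (y n)‖ → 1
  have hr : Filter.Tendsto (fun n => ‖f (y n)‖) Filter.atTop (𝓝 1) := by
    have hlo : Filter.Tendsto (fun n : ℕ => 1 - 1 / ((n : ℝ) + 1)) Filter.atTop (𝓝 1) := by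
      simpa using (tendsto_const_nhds : Filter.Tendsto (fun _ : ℕ => (1 : ℝ)) Filter.atTop (𝓝 1)).sub tendsto_one_div_add_atTop_nhds_zero_nat
    refine tendsto_of_tendsto_of_tendsto_of_le_of_le hlo tendsto_const_nhds
      (fun n => (hy2 n).le) (fun n => le_trans (hle _) (hy1 n))
  have hfz : f z = 1 := by
    have h1 : Filter.Tendsto (fun n => f (y n)) Filter.atTop (𝓝 (f z)) :=
      (f.continuous.tendsto z).comp hz
    have h2 : Filter.Tendsto (fun n => f (y n)) Filter.atTop (𝓝 (1 : 𝕜)) := by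
      have : Filter.Tendsto (fun n => ((‖f (y n)‖ : ℝ) : 𝕜)) Filter.atTop (𝓝 ((1 : ℝ) : 𝕜)) :=
        (RCLike.continuous_ofReal.tendsto 1).comp hr
      simpa [← hy3] using this
    exact tendsto_nhds_unique h1 h2
  refine ⟨z, ?_, hfz⟩
  have hz1 : ‖z‖ ≤ 1 := by
    have h1 : Filter.Tendsto (fun n => ‖y n‖) Filter.atTop (𝓝 ‖z‖) :=
      (continuous_norm.tendsto z).comp hz
    exact le_of_tendsto h1 (Filter.Eventually.of_forall hy1)
  have hz2 : 1 ≤ ‖z‖ := by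
    have := hle z
    rw [hfz] at this
    simpa using this
  linarith

/-- If `X` is a uniformly convex Banach space over `𝕜 = ℝ` or `ℂ`, then
the pair `(X, 𝕜)` has the property `L_{o,o}` for linear functionals. -/
theorem stmt0 {𝕜 : Type*} [RCLike 𝕜] {X : Type*} [NormedAddCommGroup X]
    [NormedSpace 𝕜 X] [UniformConvexSpace X] [CompleteSpace X] :
    ∀ ε > (0 : ℝ), ∀ f : X →L[𝕜] 𝕜, ‖f‖ = 1 →
      ∃ η > (0 : ℝ), ∀ x : X, ‖x‖ = 1 → 1 - η < ‖f x‖ →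
        ∃ x₀ : X, ‖x₀‖ = 1 ∧ ‖f x₀‖ = 1 ∧ ‖x₀ - x‖ < ε := by
  intro ε hε f hf
  letI : NormedSpace ℝ X := NormedSpace.restrictScalars ℝ 𝕜 X
  have hle : ∀ v : X, ‖f v‖ ≤ ‖v‖ := fun v => by
    simpa [hf] using f.le_opNorm v
  obtain ⟨δ, hδ, hconv⟩ := exists_forall_closed_ball_dist_add_le_two_sub X (half_pos hε)
  obtain ⟨z, hz, hfz⟩ := exists_norm_attained f hf
  refine ⟨min δ 1, lt_min hδ one_pos, fun x hx hfx => ?_⟩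
  have hfx0 : f x ≠ 0 := by
    intro h
    rw [h, norm_zero] at hfx
    have := min_le_right δ 1
    linarith
  obtain ⟨u, hu, hux⟩ := phase_smul f x hfx0
  have hune : u ≠ 0 := by
    intro h; rw [h, norm_zero] at hu; exact zero_ne_one hu
  have hy : ‖u • x‖ = 1 := by rw [norm_smul, hu, hx, one_mul]
  have key : 2 - δ < ‖z + u • x‖ := by
    have h1 : f (z + u • x) = (((1 + ‖f x‖ : ℝ)) : 𝕜) := by
      rw [map_add, hfz, hux]; push_cast; ring
    have h2 : ‖f (z + u • x)‖ = 1 + ‖f x‖ := by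
      rw [h1, RCLike.norm_ofReal, abs_of_nonneg (by positivity)]
    have h3 := hle (z + u • x)
    have := min_le_left δ 1
    rw [h2] at h3
    linarith
  have hclose : ‖z - u • x‖ < ε / 2 := by
    by_contra h
    push_neg at h
    have := hconv hz.le hy.le h
    linarith
  refine ⟨u⁻¹ • z, ?_, ?_, ?_⟩
  · rw [norm_smul, norm_inv, hu, inv_one, one_mul, hz]
  · rw [map_smul, hfz, smul_eq_mul, mul_one, norm_inv, hu, inv_one]
  · have heq : u⁻¹ • z - x = u⁻¹ • (z - u • x) := by
      rw [smul_sub, smul_smul, inv_mul_cancel₀ hune, one_smul]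
    rw [heq, norm_smul, norm_inv, hu, inv_one, one_mul]
    linarith [half_lt_self hε]
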